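/- Let G₁, G₂ ∈ SL(2,ℂ) satisfy Tr G₁ = 2, Tr G₂ = 2 and Tr(G₂·G₁) = 2, and suppose G₁ ≠ I. Then every nonzero spinor z with G₁·z = z also satisfies G₂·z = z; that is, G₁ and G₂ have a common fixed spinor direction. -/
import Mathlib


open Matrix

/-- if `G₁, G₂ ∈ SL(2,ℂ)` have trace 2, `Tr(G₂G₁) = 2` and `G₁ ≠ I`,
then every nonzero spinor fixed by `G₁` is also fixed by `G₂`. -/
theorem common_fixed_spinor (G₁ G₂ : Matrix (Fin 2) (Fin 2) ℂ)
    (h₁det : G₁.det = 1) (h₂det : G₂.det = 1)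
    (h₁tr : G₁.trace = 2) (h₂tr : G₂.trace = 2)
    (h₂₁tr : (G₂ * G₁).trace = 2) (hG₁ : G₁ ≠ 1) :
    ∀ z : Fin 2 → ℂ, z ≠ 0 → G₁.mulVec z = z → G₂.mulVec z = z := by
  intro z hz hfix
  set a := G₁ 0 0 with ha
  set b := G₁ 0 1 with hb
  set c := G₁ 1 0 with hc
  set d := G₁ 1 1 with hd
  set p := G₂ 0 0 with hp
  set q := G₂ 0 1 with hq
  set r := G₂ 1 0 with hr
  set s := G₂ 1 1 with hs
  have hD1 : a * d - b * c = 1 := by rw [Matrix.det_fin_two] at h₁det; exact h₁det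
  have hT1 : a + d = 2 := by rw [Matrix.trace_fin_two] at h₁tr; exact h₁tr
  have hD2 : p * s - q * r = 1 := by rw [Matrix.det_fin_two] at h₂det; exact h₂det
  have hT2 : p + s = 2 := by rw [Matrix.trace_fin_two] at h₂tr; exact h₂tr
  have hT21 : p * a + q * c + (r * b + s * d) = 2 := by
    rw [Matrix.trace_fin_two] at h₂₁tr
    simpa [Matrix.mul_apply, Fin.sum_univ_two] using h₂₁tr
  -- nilpotent relations for N₁ = G₁ - I, N₂ = G₂ - I
  have H1 : (a - 1) ^ 2 + b * c = 0 := by linear_combination -hD1 + a * hT1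
  have H2 : (p - 1) ^ 2 + q * r = 0 := by linear_combination -hD2 + p * hT2
  have H3 : 2 * (p - 1) * (a - 1) + q * c + r * b = 0 := by
    linear_combination hT21 - s * hT1 + (a - 2) * hT2
  have hf0 : a * z 0 + b * z 1 = z 0 := by
    have := congrFun hfix 0
    simpa [Matrix.mulVec, dotProduct, Fin.sum_univ_two] using this
  have hf1 : c * z 0 + d * z 1 = z 1 := by
    have := congrFun hfix 1
    simpa [Matrix.mulVec, dotProduct, Fin.sum_univ_two] using this
  have goal0 : p * z 0 + q * z 1 = z 0 → r * z 0 + s * z 1 = z 1 → G₂.mulVec z = z := by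
    intro g0 g1
    funext i
    fin_cases i
    · simpa [Matrix.mulVec, dotProduct, Fin.sum_univ_two] using g0
    · simpa [Matrix.mulVec, dotProduct, Fin.sum_univ_two] using g1
  by_cases hbz : b = 0
  · by_cases hcz : c = 0
    · -- then N₁ = 0, i.e. G₁ = 1, contradiction
      exfalso
      have hsq : (a - 1) ^ 2 = 0 := by linear_combination H1 - b * hcz
      have ha1 : a = 1 := by
        have := pow_eq_zero_iff (n := 2) (by norm_num) |>.mp hsq
        linear_combination this
      have hd1 : d = 1 := by linear_combination hT1 - ha1
      apply hG₁
      ext i j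
      fin_cases i <;> fin_cases j <;>
        simp [Matrix.one_apply, ← ha, ← hb, ← hc, ← hd, ha1, hd1, hbz, hcz]
    · -- case c ≠ 0 : c * z 0 = (a-1) * z 1
      have hrel : c * z 0 = (a - 1) * z 1 := by linear_combination hf1 - z 1 * hT1
      have E1 : (p - 1) * (a - 1) + q * c = 0 := by
        have hsq : ((p - 1) * (a - 1) + q * c) ^ 2 = 0 := by
          linear_combination q * c * H3 + (a - 1) ^ 2 * H2 - q * r * H1
        exact pow_eq_zero_iff (n := 2) (by norm_num) |>.mp hsq
      have E2 : r * (a - 1) - (p - 1) * c = 0 := by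
        have hsq : (r * (a - 1) - (p - 1) * c) ^ 2 = 0 := by
          linear_combination -r * c * H3 + r ^ 2 * H1 + c ^ 2 * H2
        exact pow_eq_zero_iff (n := 2) (by norm_num) |>.mp hsq
      apply goal0
      · refine mul_left_cancel₀ hcz ?_
        linear_combination (p - 1) * hrel + z 1 * E1
      · refine mul_left_cancel₀ hcz ?_
        linear_combination r * hrel + z 1 * E2 + c * z 1 * hT2
  · -- case b ≠ 0 : b * z 1 = (1-a) * z 0
    have hrel : b * z 1 = (1 - a) * z 0 := by linear_combination hf0
    have E1 : b * (p - 1) - q * (a - 1) = 0 := by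
      have hsq : (b * (p - 1) - q * (a - 1)) ^ 2 = 0 := by
        linear_combination b ^ 2 * H2 + q ^ 2 * H1 - q * b * H3
      exact pow_eq_zero_iff (n := 2) (by norm_num) |>.mp hsq
    have E2 : b * r + (p - 1) * (a - 1) = 0 := by
      have hsq : (b * r + (p - 1) * (a - 1)) ^ 2 = 0 := by
        linear_combination r * b * H3 + (a - 1) ^ 2 * H2 - q * r * H1
      exact pow_eq_zero_iff (n := 2) (by norm_num) |>.mp hsq
    apply goal0
    · refine mul_left_cancel₀ hbz ?_
      linear_combination q * hrel + z 0 * E1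
    · refine mul_left_cancel₀ hbz ?_
      linear_combination (s - 1) * hrel + z 0 * E2 + (1 - a) * z 0 * hT2
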